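/- Let M:(ℝ,≤)²→vect_F be a pointwise finite-dimensional persistence module admitting a finite convex isotopy subdivision of (ℝ,≤)² subordinate to M, with poset of chambers (P,≤) and chamber map F_M:(ℝ,≤)²→(P,≤). Then the pullback functor F_M^*: vect_F^{(P,≤)} → vect_F^{(ℝ,≤)²}, sending a functor N:(P,≤)→vect_F to N ∘ F_M, is fully faithful. -/

import Mathlib

/-- A persistence module over a preorder `P` with coefficients in a field `F`:
a functor `(P,≤) → Vect_F`, given by vector spaces `V p` and linear maps
`map : i ≤ j → (V i →ₗ[F] V j)` satisfying the functoriality equations. -/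
structure PersistenceModule (F : Type) [Field F] (P : Type) [Preorder P] where
  V : P → Type
  [addCommGroup : ∀ p, AddCommGroup (V p)]
  [module : ∀ p, Module F (V p)]
  map : ∀ {i j : P}, i ≤ j → (V i →ₗ[F] V j)
  map_id : ∀ i : P, map (le_refl i) = LinearMap.id
  map_comp : ∀ {i j k : P} (hij : i ≤ j) (hjk : j ≤ k),
    (map hjk).comp (map hij) = map (hij.trans hjk)

attribute [instance] PersistenceModule.addCommGroup PersistenceModule.module

/-- A zigzag path `a - x₁ - ⋯ - xₙ - b` in a preorder, where each consecutive
pair of points is comparable. -/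
inductive Zigzag (P : Type) [Preorder P] : P → P → Type
  | single (a : P) : Zigzag P a a
  | consLe {a b c : P} (h : a ≤ b) (p : Zigzag P b c) : Zigzag P a c
  | consGe {a b c : P} (h : b ≤ a) (p : Zigzag P b c) : Zigzag P a c

/-- Convexity of a subset of a poset: `i ≤ j ≤ k` with `i, k ∈ J` implies `j ∈ J`. -/
def PosetConvex {P : Type} [Preorder P] (J : Set P) : Prop :=
  ∀ i ∈ J, ∀ k ∈ J, ∀ j : P, i ≤ j → j ≤ k → j ∈ J

/-- Connectedness: any two points of `J` are joined by a finite zigzag path inside `J`. -/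
def ZigzagConnected {P : Type} [Preorder P] (J : Set P) : Prop :=
  ∀ a b : J, Nonempty (Zigzag (↥J) a b)

/-- A morphism of persistence modules (a natural transformation). -/
structure PersHom {F : Type} [Field F] {P : Type} [Preorder P]
    (M N : PersistenceModule F P) where
  app : ∀ p, M.V p →ₗ[F] N.V p
  natural : ∀ {i j : P} (h : i ≤ j), (N.map h).comp (app i) = (app j).comp (M.map h)

/-- The relation `p → q` between chambers of a subdivision `j ↦ C j`:
`p → q` iff `p = q`, or `p ≠ q` and there are `x ∈ J_p`, `y ∈ J_q` with `x ≤ y`. -/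
def chamberRel (C : ℝ × ℝ → Set (ℝ × ℝ)) : Set (ℝ × ℝ) → Set (ℝ × ℝ) → Prop :=
  fun A B => A ∈ Set.range C ∧ B ∈ Set.range C ∧
    (A = B ∨ (A ≠ B ∧ ∃ x ∈ A, ∃ y ∈ B, x ≤ y))

/-- The set of chambers of the subdivision `j ↦ C j`. -/
def ChamberPoset (C : ℝ × ℝ → Set (ℝ × ℝ)) : Type :=
  {A : Set (ℝ × ℝ) // A ∈ Set.range C}

/-- The chambers carry the preorder generated (as reflexive-transitive closure)
by `chamberRel`. -/
instance (C : ℝ × ℝ → Set (ℝ × ℝ)) : Preorder (ChamberPoset C) where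
  le A B := Relation.ReflTransGen (chamberRel C) A.1 B.1
  le_refl A := Relation.ReflTransGen.refl
  le_trans A B D hAB hBD := Relation.ReflTransGen.trans hAB hBD

/-- The map `F_M` sending a point of the plane to its chamber. -/
def chamberMap (C : ℝ × ℝ → Set (ℝ × ℝ)) : ℝ × ℝ → ChamberPoset C :=
  fun j => ⟨C j, ⟨j, rfl⟩⟩

theorem chamberMap_monotone (C : ℝ × ℝ → Set (ℝ × ℝ)) (hmem : ∀ j, j ∈ C j) :
    Monotone (chamberMap C) := by
  intro x y hxy
  show Relation.ReflTransGen (chamberRel C) (C x) (C y)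
  refine Relation.ReflTransGen.single ⟨⟨x, rfl⟩, ⟨y, rfl⟩, ?_⟩
  by_cases h : C x = C y
  · exact Or.inl h
  · exact Or.inr ⟨h, x, hmem x, y, hmem y, hxy⟩

/-- Pullback of a persistence module along a monotone map of parameter posets. -/
def PersistenceModule.pullback {F : Type} [Field F] {Q R : Type} [Preorder Q] [Preorder R]
    (N : PersistenceModule F R) (f : Q → R) (hf : Monotone f) : PersistenceModule F Q where
  V q := N.V (f q)
  addCommGroup _ := inferInstance
  module _ := inferInstance
  map h := N.map (hf h)
  map_id i := N.map_id (f i)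
  map_comp hij hjk := N.map_comp (hf hij) (hf hjk)

/-- The action of the pullback functor `π^*` on morphisms. -/
def pullbackHom {F : Type} [Field F] {Q R : Type} [Preorder Q] [Preorder R]
    {N N' : PersistenceModule F R} (f : Q → R) (hf : Monotone f)
    (α : PersHom N N') : PersHom (N.pullback f hf) (N'.pullback f hf) where
  app q := α.app (f q)
  natural h := α.natural (hf h)

section Aux

variable {F : Type} [Field F] {C : ℝ × ℝ → Set (ℝ × ℝ)}

/-- A commuting square for a pair of persistence modules. -/
def IsSq (N N' : PersistenceModule F (ChamberPoset C)) {p q : ChamberPoset C} (h : p ≤ q)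
    (A : N.V p →ₗ[F] N'.V p) (B : N.V q →ₗ[F] N'.V q) : Prop :=
  (N'.map h).comp A = B.comp (N.map h)

lemma comp_self (M : PersistenceModule F (ChamberPoset C)) {p q : ChamberPoset C}
    (h : p ≤ q) (h' : q ≤ p) : (M.map h').comp (M.map h) = LinearMap.id := by
  rw [M.map_comp h h']
  exact M.map_id p

lemma isSq_refl (N N' : PersistenceModule F (ChamberPoset C)) {p : ChamberPoset C}
    (h : p ≤ p) (A : N.V p →ₗ[F] N'.V p) : IsSq N N' h A A := by
  unfold IsSq
  rw [show N.map h = LinearMap.id from N.map_id p,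
    show N'.map h = LinearMap.id from N'.map_id p, LinearMap.id_comp, LinearMap.comp_id]

lemma isSq_trans {N N' : PersistenceModule F (ChamberPoset C)} {p q r : ChamberPoset C}
    {h₁ : p ≤ q} {h₂ : q ≤ r} {A : N.V p →ₗ[F] N'.V p} {B : N.V q →ₗ[F] N'.V q}
    {D : N.V r →ₗ[F] N'.V r} (s₁ : IsSq N N' h₁ A B) (s₂ : IsSq N N' h₂ B D) :
    IsSq N N' (h₁.trans h₂) A D := by
  unfold IsSq at *
  rw [show N.map (h₁.trans h₂) = (N.map h₂).comp (N.map h₁) from (N.map_comp h₁ h₂).symm,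
    show N'.map (h₁.trans h₂) = (N'.map h₂).comp (N'.map h₁) from (N'.map_comp h₁ h₂).symm,
    LinearMap.comp_assoc, s₁, ← LinearMap.comp_assoc, s₂, LinearMap.comp_assoc]

lemma isSq_inv {N N' : PersistenceModule F (ChamberPoset C)} {p q : ChamberPoset C}
    {h : p ≤ q} (h' : q ≤ p) {A : N.V p →ₗ[F] N'.V p} {B : N.V q →ₗ[F] N'.V q}
    (s : IsSq N N' h A B) : IsSq N N' h' B A := by
  unfold IsSq at *
  calc (N'.map h').comp B
      = (N'.map h').comp (B.comp ((N.map h).comp (N.map h'))) := by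
        rw [comp_self N h' h, LinearMap.comp_id]
    _ = (N'.map h').comp ((B.comp (N.map h)).comp (N.map h')) := by
        rw [LinearMap.comp_assoc]
    _ = (N'.map h').comp (((N'.map h).comp A).comp (N.map h')) := by rw [s]
    _ = (((N'.map h').comp (N'.map h)).comp A).comp (N.map h') := by
        simp only [LinearMap.comp_assoc]
    _ = A.comp (N.map h') := by rw [comp_self N' h h', LinearMap.id_comp]

lemma persHom_ext {P : Type} [Preorder P] {M N : PersistenceModule F P}
    {α β : PersHom M N} (h : ∀ p, α.app p = β.app p) : α = β := by
  cases α; cases β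
  simp only [PersHom.mk.injEq]
  funext p
  exact h p

/-- All points of a chamber have the same image under `chamberMap`. -/
lemma chamberMap_eq (hpart : ∀ j k, k ∈ C j → C k = C j) {x : ℝ × ℝ} (a : ↥(C x)) :
    chamberMap C ↑a = chamberMap C x :=
  Subtype.ext (hpart x ↑a a.2)

/-- β-components are square-related on points in the same chamber. -/
lemma beta_same (hmem : ∀ j, j ∈ C j) (hpart : ∀ j k, k ∈ C j → C k = C j)
    (hconn : ∀ j, ZigzagConnected (C j))
    {N N' : PersistenceModule F (ChamberPoset C)}
    (β : PersHom (N.pullback (chamberMap C) (chamberMap_monotone C hmem))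
      (N'.pullback (chamberMap C) (chamberMap_monotone C hmem)))
    (x y : ℝ × ℝ) (e : chamberMap C x = chamberMap C y)
    (h : chamberMap C x ≤ chamberMap C y) :
    IsSq N N' h (β.app x) (β.app y) := by
  have hy : y ∈ C x := by
    have : C y = C x := congrArg Subtype.val e.symm
    rw [← this]; exact hmem y
  obtain ⟨z⟩ := hconn x ⟨x, hmem x⟩ ⟨y, hy⟩
  -- generalize over endpoints of the zigzag
  suffices H : ∀ (a b : ↥(C x)) (_ : Zigzag (↥(C x)) a b)
      (h : chamberMap C ↑a ≤ chamberMap C ↑b), IsSq N N' h (β.app ↑a) (β.app ↑b) by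
    exact H ⟨x, hmem x⟩ ⟨y, hy⟩ z h
  intro a b z
  induction z with
  | single a => intro h; exact isSq_refl N N' h (β.app ↑a)
  | consLe hab z ih =>
    rename_i a m c
    intro h
    have hab' : (↑a : ℝ × ℝ) ≤ ↑m := hab
    have s₁ : IsSq N N' (chamberMap_monotone C hmem hab') (β.app ↑a) (β.app ↑m) :=
      β.natural hab'
    have e₂ : chamberMap C (↑m : ℝ × ℝ) = chamberMap C ↑c :=
      (chamberMap_eq hpart m).trans (chamberMap_eq hpart c).symm
    have s₂ := ih e₂.le
    exact isSq_trans s₁ s₂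
  | consGe hab z ih =>
    rename_i a m c
    intro h
    have hab' : (↑m : ℝ × ℝ) ≤ ↑a := hab
    have s₀ : IsSq N N' (chamberMap_monotone C hmem hab') (β.app ↑m) (β.app ↑a) :=
      β.natural hab'
    have e₁ : chamberMap C (↑a : ℝ × ℝ) = chamberMap C ↑m :=
      (chamberMap_eq hpart a).trans (chamberMap_eq hpart m).symm
    have s₁ : IsSq N N' e₁.le (β.app ↑a) (β.app ↑m) := isSq_inv e₁.le s₀
    have e₂ : chamberMap C (↑m : ℝ × ℝ) = chamberMap C ↑c :=
      (chamberMap_eq hpart m).trans (chamberMap_eq hpart c).symm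
    have s₂ := ih e₂.le
    exact isSq_trans s₁ s₂

/-- β-components are square-related along any relation in the chamber poset. -/
lemma beta_nat (hmem : ∀ j, j ∈ C j) (hpart : ∀ j k, k ∈ C j → C k = C j)
    (hconn : ∀ j, ZigzagConnected (C j))
    {N N' : PersistenceModule F (ChamberPoset C)}
    (β : PersHom (N.pullback (chamberMap C) (chamberMap_monotone C hmem))
      (N'.pullback (chamberMap C) (chamberMap_monotone C hmem)))
    (a b : ℝ × ℝ) (h : chamberMap C a ≤ chamberMap C b) :
    IsSq N N' h (β.app a) (β.app b) := by
  have h' : Relation.ReflTransGen (chamberRel C) (C a) (C b) := h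
  suffices H : ∀ B, Relation.ReflTransGen (chamberRel C) (C a) B →
      ∀ b : ℝ × ℝ, C b = B → ∀ hh : chamberMap C a ≤ chamberMap C b,
      IsSq N N' hh (β.app a) (β.app b) from H (C b) h' b rfl h
  intro B hB
  induction hB with
  | refl =>
    intro b hb hh
    exact beta_same hmem hpart hconn β a b (Subtype.ext hb.symm) hh
  | tail hAB' step ih =>
    rename_i B' B
    intro b hb hh
    obtain ⟨hB'r, hBr, hcase⟩ := step
    rcases hcase with hEq | ⟨_, p, hp, q, hq, hpq⟩
    · exact ih b (hb.trans hEq.symm) (by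
        show Relation.ReflTransGen (chamberRel C) (C a) (C b)
        rw [hb.trans hEq.symm]; exact hAB')
    · -- p ∈ B', q ∈ B, p ≤ q
      obtain ⟨jp, hjp⟩ := hB'r
      obtain ⟨jq, hjq⟩ := hBr
      have hCp : C p = B' := by rw [← hjp] at hp ⊢; exact hpart jp p hp
      have hCq : C q = B := by rw [← hjq] at hq ⊢; exact hpart jq q hq
      have h₁ : chamberMap C a ≤ chamberMap C p := by
        show Relation.ReflTransGen (chamberRel C) (C a) (C p)
        rw [hCp]; exact hAB'
      have s₁ : IsSq N N' h₁ (β.app a) (β.app p) := ih p hCp h₁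
      have s₂ : IsSq N N' (chamberMap_monotone C hmem hpq) (β.app p) (β.app q) :=
        β.natural hpq
      have e₃ : chamberMap C q = chamberMap C b := Subtype.ext (hCq.trans hb.symm)
      have s₃ : IsSq N N' e₃.le (β.app q) (β.app b) :=
        beta_same hmem hpart hconn β q b e₃ e₃.le
      exact isSq_trans (isSq_trans s₁ s₂) s₃

end Aux

/-- Let `M` be a persistence module on `(ℝ,≤)²` admitting a finite
convex isotopy subdivision (encoded by the chamber map `C`), with poset of chambers
`ChamberPoset C` and chamber map `F_M = chamberMap C`. Then the pullback functor
`F_M^* : vect_F^{(P,≤)} → vect_F^{(ℝ,≤)²}`, `N ↦ N ∘ F_M`, is fully faithful, i.e.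
bijective on hom-sets. -/
theorem statement13 (F : Type) [Field F] (M : PersistenceModule F (ℝ × ℝ))
    (C : ℝ × ℝ → Set (ℝ × ℝ))
    (hmem : ∀ j, j ∈ C j)
    (hpart : ∀ j k, k ∈ C j → C k = C j)
    (hfin : (Set.range C).Finite)
    (hconn : ∀ j, ZigzagConnected (C j))
    (hconv : ∀ j, PosetConvex (C j))
    (hiso : ∀ (j x y : ℝ × ℝ), x ∈ C j → y ∈ C j → ∀ h : x ≤ y,
      Function.Bijective (M.map h))
    (N N' : PersistenceModule F (ChamberPoset C)) :
    Function.Bijective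
      (fun α : PersHom N N' =>
        pullbackHom (chamberMap C) (chamberMap_monotone C hmem) α) := by
  classical
  set f := chamberMap C with hfdef
  set hf := chamberMap_monotone C hmem with hfdef'
  have hsurj : ∀ p : ChamberPoset C, ∃ j : ℝ × ℝ, f j = p := by
    intro p
    obtain ⟨j, hj⟩ := p.2
    exact ⟨j, Subtype.ext hj⟩
  choose rep hrep using hsurj
  constructor
  · -- injective
    intro α α' h
    have happ : ∀ x : ℝ × ℝ, α.app (f x) = α'.app (f x) := by
      intro x
      exact congrFun (congrArg PersHom.app h) x
    refine persHom_ext ?_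
    intro p
    rw [← hrep p]
    exact happ (rep p)
  · -- surjective
    intro β
    refine ⟨⟨fun p => (N'.map (hrep p).le).comp
        ((β.app (rep p)).comp (N.map (hrep p).ge)), ?_⟩, ?_⟩
    · -- naturality
      intro i j h
      have sA : IsSq N N' (hrep i).ge
          ((N'.map (hrep i).le).comp ((β.app (rep i)).comp (N.map (hrep i).ge)))
          (β.app (rep i)) := by
        unfold IsSq
        erw [← LinearMap.comp_assoc, ← LinearMap.comp_assoc,
          comp_self N' (hrep i).le (hrep i).ge, LinearMap.id_comp]
        rfl
      have sB : IsSq N N' (hrep j).le (β.app (rep j))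
          ((N'.map (hrep j).le).comp ((β.app (rep j)).comp (N.map (hrep j).ge))) := by
        unfold IsSq
        erw [LinearMap.comp_assoc, LinearMap.comp_assoc,
          comp_self N (hrep j).le (hrep j).ge, LinearMap.comp_id]
      have k : f (rep i) ≤ f (rep j) := (hrep i).le.trans (h.trans (hrep j).ge)
      have sM : IsSq N N' k (β.app (rep i)) (β.app (rep j)) :=
        beta_nat hmem hpart hconn β (rep i) (rep j) k
      exact isSq_trans (isSq_trans sA sM) sB
    · -- pullback of α is β
      refine persHom_ext ?_
      intro x
      show (N'.map (hrep (f x)).le).comp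
        ((β.app (rep (f x))).comp (N.map (hrep (f x)).ge)) = β.app x
      have s : IsSq N N' (hrep (f x)).le (β.app (rep (f x))) (β.app x) :=
        beta_same hmem hpart hconn β (rep (f x)) x (hrep (f x)) (hrep (f x)).le
      erw [← LinearMap.comp_assoc, s, LinearMap.comp_assoc,
        comp_self N (hrep (f x)).ge (hrep (f x)).le, LinearMap.comp_id]
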